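/- Under the same iteration with x̂ a fixed point of T and b ≥ ‖x⁰ − x̂‖, for every k ≥ 1 there exists 0 ≤ i ≤ k−1 with ‖x^{2i+2} − x̄^{2i+1}‖² ≤ (α/(1−α)) b²/k. -/

import Mathlib

theorem stmt_12 {X : Type*} [NormedAddCommGroup X] [InnerProductSpace ℝ X]
    (α : ℝ) (hα : 0 < α) (hα1 : α < 1) (T : X → X)
    (hav : ∀ x y : X, (1 - α) * ‖(x - T x) - (y - T y)‖ ^ 2 ≤
      α * (‖x - y‖ ^ 2 - ‖T x - T y‖ ^ 2))
    (αk : ℕ → ℝ) (hαk : ∀ k, 0 ≤ αk k ∧ αk k ≤ (1 - α) / α)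
    (xh : X) (hfix : T xh = xh)
    (x xb : ℕ → X)
    (b : ℝ) (hb : ‖x 0 - xh‖ ≤ b)
    (hxb : ∀ k, xb k = if Even k then x k else x k + αk k • (x k - x (k - 1)))
    (hx : ∀ k, x (k + 1) = T (xb k)) :
    ∀ k : ℕ, 1 ≤ k → ∃ i ≤ k - 1,
      ‖x (2 * i + 2) - xb (2 * i + 1)‖ ^ 2 ≤ (α / (1 - α)) * b ^ 2 / k := by
  set κ : ℝ := (1 - α) / α with hκdef
  have hκpos : 0 < κ := div_pos (by linarith) hα
  -- one-step fejer estimate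
  have step : ∀ z : X, κ * ‖T z - z‖ ^ 2 ≤ ‖z - xh‖ ^ 2 - ‖T z - xh‖ ^ 2 := by
    intro z
    have h := hav z xh
    rw [hfix] at h
    have h2 : (1 - α) * ‖z - T z‖ ^ 2 ≤ α * (‖z - xh‖ ^ 2 - ‖T z - xh‖ ^ 2) := by
      have : (z - T z) - (xh - xh) = z - T z := by abel
      rwa [this] at h
    have hn : ‖T z - z‖ = ‖z - T z‖ := norm_sub_rev _ _
    rw [hκdef, hn, div_mul_eq_mul_div, div_le_iff₀ hα]
    nlinarith [h2]
  set s : ℕ → ℝ := fun i => ‖x (2 * i + 2) - xb (2 * i + 1)‖ ^ 2 with hs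
  -- per-pair estimate
  have pair : ∀ i : ℕ, ‖x (2 * i + 2) - xh‖ ^ 2 + κ * s i ≤ ‖x (2 * i) - xh‖ ^ 2 := by
    intro i
    have heven : xb (2 * i) = x (2 * i) := by
      rw [hxb]; simp [even_two_mul i]
    have h1 : x (2 * i + 1) = T (x (2 * i)) := by rw [hx, heven]
    -- even step
    have hA : κ * ‖x (2 * i + 1) - x (2 * i)‖ ^ 2 ≤
        ‖x (2 * i) - xh‖ ^ 2 - ‖x (2 * i + 1) - xh‖ ^ 2 := by
      have := step (x (2 * i))
      rwa [← h1] at this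
    -- extrapolation
    set t : ℝ := αk (2 * i + 1) with ht
    have ht0 : 0 ≤ t := (hαk _).1
    have ht1 : t ≤ κ := (hαk _).2
    have hodd : xb (2 * i + 1) = x (2 * i + 1) + t • (x (2 * i + 1) - x (2 * i)) := by
      rw [hxb]
      have : ¬ Even (2 * i + 1) := by simp [Nat.even_add_one, even_two_mul i]
      simp [this]; rfl
    set a : X := x (2 * i + 1) - xh with ha
    set d : X := x (2 * i + 1) - x (2 * i) with hd
    have had : a - d = x (2 * i) - xh := by rw [ha, hd]; abel
    have hexp : ‖xb (2 * i + 1) - xh‖ ^ 2 =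
        ‖a‖ ^ 2 + 2 * t * inner ℝ a d + t ^ 2 * ‖d‖ ^ 2 := by
      have : xb (2 * i + 1) - xh = a + t • d := by rw [hodd, ha, hd]; abel
      rw [this, norm_add_sq_real, real_inner_smul_right, norm_smul]
      rw [Real.norm_eq_abs, abs_of_nonneg ht0]
      ring
    have hsub : ‖a - d‖ ^ 2 = ‖a‖ ^ 2 - 2 * inner ℝ a d + ‖d‖ ^ 2 := norm_sub_sq_real a d
    -- bound on ‖xb(2i+1) - xh‖²
    have hbar : ‖xb (2 * i + 1) - xh‖ ^ 2 ≤ ‖x (2 * i) - xh‖ ^ 2 := by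
      rw [hexp]
      rw [had] at hsub
      have hd0 : (0:ℝ) ≤ ‖d‖ ^ 2 := by positivity
      nlinarith [hA, hsub, mul_le_mul_of_nonneg_left hA ht0,
        mul_nonneg (sub_nonneg.2 ht1) hd0,
        mul_nonneg ht0 (mul_nonneg (sub_nonneg.2 ht1) hd0)]
    -- second step
    have h2 : x (2 * i + 2) = T (xb (2 * i + 1)) := hx (2 * i + 1)
    have hB : κ * s i ≤ ‖xb (2 * i + 1) - xh‖ ^ 2 - ‖x (2 * i + 2) - xh‖ ^ 2 := by
      have := step (xb (2 * i + 1))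
      rw [← h2] at this
      exact this
    linarith
  -- telescoping sum
  have tele : ∀ n : ℕ, ‖x (2 * n) - xh‖ ^ 2 + κ * ∑ i ∈ Finset.range n, s i ≤
      ‖x 0 - xh‖ ^ 2 := by
    intro n
    induction n with
    | zero => simp
    | succ n ih =>
      have h2n : 2 * (n + 1) = 2 * n + 2 := by ring
      rw [h2n, Finset.sum_range_succ]
      have e : κ * (∑ i ∈ Finset.range n, s i + s n) =
          κ * ∑ i ∈ Finset.range n, s i + κ * s n := by ring
      rw [e]
      have := pair n
      linarith
  intro k hk
  set c : ℝ := (α / (1 - α)) * b ^ 2 / k with hc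
  by_contra hcon
  push_neg at hcon
  have hall : ∀ i ∈ Finset.range k, c < s i := by
    intro i hi
    have hik := Finset.mem_range.mp hi
    exact hcon i (by omega)
  have hsum : (k : ℝ) * c < ∑ i ∈ Finset.range k, s i := by
    calc (k : ℝ) * c = ∑ _i ∈ Finset.range k, c := by
          rw [Finset.sum_const, Finset.card_range, nsmul_eq_mul]
      _ < ∑ i ∈ Finset.range k, s i :=
          Finset.sum_lt_sum_of_nonempty (by simp; omega) hall
  have hb2 : ‖x 0 - xh‖ ^ 2 ≤ b ^ 2 := by
    have h0 : 0 ≤ ‖x 0 - xh‖ := norm_nonneg _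
    nlinarith
  have hkc : κ * ((k : ℝ) * c) = b ^ 2 := by
    have hkne : (k : ℝ) ≠ 0 := by positivity
    have h1 : α ≠ 0 := ne_of_gt hα
    have h2 : (1 : ℝ) - α ≠ 0 := by linarith
    rw [hc, hκdef]
    field_simp
  have hfin : κ * ∑ i ∈ Finset.range k, s i ≤ b ^ 2 := by
    have := tele k
    have h0 : 0 ≤ ‖x (2 * k) - xh‖ ^ 2 := by positivity
    linarith
  have : κ * ((k : ℝ) * c) < κ * ∑ i ∈ Finset.range k, s i :=
    (mul_lt_mul_iff_right₀ hκpos).mpr hsum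
  linarith
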